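/- arXiv:2105.11383 — 2 statements merged into one kernel-verified Lean document; each statement's English description precedes it below -/
import Mathlib

section
/- Let N ≥ 3 be odd, e₀ ≥ 1, and let C_N ∈ ℝ^{N×N} be defined by (C_N)_{jm} = (B_N)_{jm} e_{jm} with 0 < e_{jm} ≤ e₀ for all 1 ≤ j, m ≤ N. Suppose ε > 0 and |e_{jm} − 1| ≤ ε/(N − 1) for all 1 ≤ j, m ≤ N. Then {z ∈ ℂ : |z| ≤ √((N−1)/2) − ε} ⊆ W(C_N) and [ε − √((N+1)/2), √((N+1)/2) − ε] ⊆ W(C_N), where the interval is regarded as a subset of the real axis in ℂ. -/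
open Complex Matrix

/-- The `N × N` real matrix `B_N` with entries `(B_N)_{jm} = (−1)^{m+1} sign(m − j)`,
for 1-based indices `j, m ∈ {1, …, N}` (here realised with 0-based `Fin N` indices). -/
noncomputable def matB (N : ℕ) : Matrix (Fin N) (Fin N) ℝ := fun j m =>
  (-1 : ℝ) ^ (((m : ℕ) + 1) + 1) *
    Real.sign ((((m : ℕ) + 1 : ℕ) : ℝ) - (((j : ℕ) + 1 : ℕ) : ℝ))

/-- The matrix `C_N` with entries `(C_N)_{jm} = (B_N)_{jm} e_{jm}`. -/
noncomputable def matC (N : ℕ) (e : Fin N → Fin N → ℝ) : Matrix (Fin N) (Fin N) ℝ :=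
  fun j m => matB N j m * e j m

/-- The numerical range `W(M) = {x* M x : x ∈ ℂ^N, ‖x‖₂ = 1}` of a complex `N × N` matrix,
regarded as an operator on `ℂ^N` with the Euclidean norm. -/
noncomputable def mNumRange {N : ℕ} (M : Matrix (Fin N) (Fin N) ℂ) : Set ℂ :=
  {z | ∃ x : Fin N → ℂ, (∑ i, ‖x i‖ ^ 2) = 1 ∧ z = dotProduct (star x) (M.mulVec x)}

/-- The numerical radius `w(M) = sup {|z| : z ∈ W(M)}`. -/
noncomputable def mNumRadius {N : ℕ} (M : Matrix (Fin N) (Fin N) ℂ) : ℝ :=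
  sSup {r : ℝ | ∃ z ∈ mNumRange M, r = ‖z‖}

/-- The numerical abscissa `w_r(M) = sup {Re z : z ∈ W(M)}`. -/
noncomputable def mNumAbscissa {N : ℕ} (M : Matrix (Fin N) (Fin N) ℂ) : ℝ :=
  sSup {r : ℝ | ∃ z ∈ mNumRange M, r = z.re}

/-- The operator norm `‖M‖₂` of a complex matrix, induced by the Euclidean norm on `ℂ^N`. -/
noncomputable def l2OpNorm {N : ℕ} (M : Matrix (Fin N) (Fin N) ℂ) : ℝ :=
  ‖Matrix.toEuclideanCLM (𝕜 := ℂ) (n := Fin N) M‖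

/-- The Hermitian matrix `M^θ := (e^{iθ} M + e^{−iθ} M*)/2`. -/
noncomputable def mTheta {N : ℕ} (M : Matrix (Fin N) (Fin N) ℂ) (θ : ℝ) :
    Matrix (Fin N) (Fin N) ℂ :=
  (2⁻¹ : ℂ) • (Complex.exp ((θ : ℂ) * Complex.I) • M +
    Complex.exp (-((θ : ℂ) * Complex.I)) • Mᴴ)

/-! ### Auxiliary generic lemmas about the numerical range -/

namespace NRAux

open Finset

variable {N : ℕ}

lemma dot_self_eq (x : Fin N → ℂ) :
    dotProduct (star x) x = ((∑ i, ‖x i‖ ^ 2 : ℝ) : ℂ) := by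
  simp only [dotProduct, Pi.star_apply]
  push_cast
  refine Finset.sum_congr rfl fun i _ => ?_
  rw [Complex.star_def, mul_comm, Complex.mul_conj, Complex.normSq_eq_norm_sq]
  norm_cast

lemma qf_expand (M : Matrix (Fin N) (Fin N) ℂ) (x y : Fin N → ℂ) (a b : ℂ) :
    dotProduct (star (a • x + b • y)) (M.mulVec (a • x + b • y))
    = (starRingEnd ℂ) a * a * dotProduct (star x) (M.mulVec x)
      + (starRingEnd ℂ) a * b * dotProduct (star x) (M.mulVec y)
      + (starRingEnd ℂ) b * a * dotProduct (star y) (M.mulVec x)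
      + (starRingEnd ℂ) b * b * dotProduct (star y) (M.mulVec y) := by
  simp only [star_add, star_smul, Matrix.mulVec_add, Matrix.mulVec_smul,
    add_dotProduct, dotProduct_add, smul_dotProduct,
    dotProduct_smul, smul_eq_mul, Complex.star_def]
  ring

lemma dot_expand (x y : Fin N → ℂ) (a b : ℂ) :
    dotProduct (star (a • x + b • y)) (a • x + b • y)
    = (starRingEnd ℂ) a * a * dotProduct (star x) x
      + (starRingEnd ℂ) a * b * dotProduct (star x) y
      + (starRingEnd ℂ) b * a * dotProduct (star y) x
      + (starRingEnd ℂ) b * b * dotProduct (star y) y := by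
  have := qf_expand (1 : Matrix (Fin N) (Fin N) ℂ) x y a b
  simpa [Matrix.one_mulVec] using this

lemma smul_norm_sum (c : ℝ) (x : Fin N → ℂ) :
    (∑ i, ‖((c : ℂ) • x) i‖ ^ 2) = c ^ 2 * ∑ i, ‖x i‖ ^ 2 := by
  rw [Finset.mul_sum]
  refine Finset.sum_congr rfl fun i _ => ?_
  simp [norm_smul, mul_pow, sq_abs]

lemma key_segment (A : Matrix (Fin N) (Fin N) ℂ) (x y : Fin N → ℂ)
    (hx1 : (∑ i, ‖x i‖ ^ 2) = 1) (hy1 : (∑ i, ‖y i‖ ^ 2) = 1)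
    (hqx : dotProduct (star x) (A.mulVec x) = 1)
    (hqy : dotProduct (star y) (A.mulVec y) = 0)
    (t : ℝ) (ht0 : 0 ≤ t) (ht1 : t ≤ 1) :
    ∃ v : Fin N → ℂ, (∑ i, ‖v i‖ ^ 2) = 1 ∧
      dotProduct (star v) (A.mulVec v) = (t : ℂ) := by
  classical
  set a : ℂ := dotProduct (star y) (A.mulVec x) with ha
  set b : ℂ := dotProduct (star x) (A.mulVec y) with hb
  set u0 : ℂ := a - (starRingEnd ℂ) b with hu0
  set ω : ℂ := if u0 = 0 then 1 else (starRingEnd ℂ) u0 / (‖u0‖ : ℂ) with hω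
  have hωabs : ‖ω‖ = 1 := by
    rw [hω]
    split_ifs with h
    · simp
    · rw [norm_div]
      simp [h]
  have hωu : (ω * u0).im = 0 := by
    rw [hω]
    split_ifs with h
    · simp [h]
    · rw [div_mul_eq_mul_div, mul_comm ((starRingEnd ℂ) u0) u0, Complex.mul_conj]
      rw [show ((Complex.normSq u0 : ℝ) : ℂ) / ((‖u0‖ : ℝ) : ℂ)
            = ((Complex.normSq u0 / ‖u0‖ : ℝ) : ℂ) by push_cast; ring]
      exact Complex.ofReal_im _
  -- the rotated x
  set x' : Fin N → ℂ := ω • x with hx'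
  have hωne : ω ≠ 0 := by
    intro h; rw [h] at hωabs; simp at hωabs
  have hx'1 : (∑ i, ‖x' i‖ ^ 2) = 1 := by
    rw [hx']
    calc (∑ i, ‖(ω • x) i‖ ^ 2) = ∑ i, ‖x i‖ ^ 2 := by
          refine Finset.sum_congr rfl fun i _ => ?_
          simp [norm_smul, hωabs]
      _ = 1 := hx1
  have hωω : (starRingEnd ℂ) ω * ω = 1 := by
    rw [mul_comm, Complex.mul_conj]
    norm_cast
    rw [Complex.normSq_eq_norm_sq, hωabs]; norm_num
  have hqx' : dotProduct (star x') (A.mulVec x') = 1 := by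
    rw [hx']
    rw [show (ω • x : Fin N → ℂ) = ω • x + (0 : ℂ) • y by simp]
    rw [qf_expand, hqx, hqy]
    simp [hωω]
  -- cross terms
  set c₀ : ℂ := dotProduct (star x') (A.mulVec y)
      + dotProduct (star y) (A.mulVec x') with hc₀
  have hc₀val : c₀ = (starRingEnd ℂ) ω * b + ω * a := by
    rw [hc₀, hx']
    rw [show (star (ω • x)) = (starRingEnd ℂ) ω • star x by
      rw [star_smul]; rfl]
    rw [smul_dotProduct, Matrix.mulVec_smul, dotProduct_smul]
    simp [smul_eq_mul, ha, hb]
    try ring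
  have hc₀im : c₀.im = 0 := by
    have h1 : c₀ = ω * u0 + (ω * (starRingEnd ℂ) b + (starRingEnd ℂ) (ω * (starRingEnd ℂ) b)) := by
      rw [hc₀val, hu0]
      simp only [_root_.map_mul, Complex.conj_conj]
      ring
    rw [h1]
    simp only [Complex.add_im, hωu, Complex.add_im, Complex.mul_im, Complex.conj_re,
      Complex.conj_im, zero_add]
    try ring
  have hρ : c₀ = ((c₀.re : ℝ) : ℂ) := by
    conv_lhs => rw [← Complex.re_add_im c₀]
    rw [hc₀im]
    simp
  set ρ : ℝ := c₀.re with hρdef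
  -- inner product cross term
  set d0 : ℂ := dotProduct (star x') y with hd0
  have hdconj : dotProduct (star y) x' = (starRingEnd ℂ) d0 := by
    rw [hd0, star_dotProduct]
    simp [Complex.star_def]
  set σ : ℝ := d0.re with hσ
  -- the path
  set v : ℝ → (Fin N → ℂ) := fun s => ((1 - s : ℝ) : ℂ) • x' + ((s : ℝ) : ℂ) • y with hv
  set nf : ℝ → ℝ := fun s => (1 - s) ^ 2 + s ^ 2 + 2 * σ * (s * (1 - s)) with hnf
  have hvnorm : ∀ s : ℝ, (∑ i, ‖v s i‖ ^ 2) = nf s := by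
    intro s
    have h1 : dotProduct (star (v s)) (v s) = ((nf s : ℝ) : ℂ) := by
      rw [hv]
      simp only
      rw [show dotProduct (star (((1 - s : ℝ) : ℂ) • x' + ((s : ℝ) : ℂ) • y))
            ((((1 - s : ℝ) : ℂ)) • x' + ((s : ℝ) : ℂ) • y)
          = (starRingEnd ℂ) ((1-s : ℝ) : ℂ) * ((1-s:ℝ):ℂ) * dotProduct (star x') x'
            + (starRingEnd ℂ) ((1-s:ℝ):ℂ) * ((s:ℝ):ℂ) * dotProduct (star x') y
            + (starRingEnd ℂ) ((s:ℝ):ℂ) * ((1-s:ℝ):ℂ) * dotProduct (star y) x'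
            + (starRingEnd ℂ) ((s:ℝ):ℂ) * ((s:ℝ):ℂ) * dotProduct (star y) y from by
        have := qf_expand (1 : Matrix (Fin N) (Fin N) ℂ) x' y ((1-s:ℝ):ℂ) ((s:ℝ):ℂ)
        simpa [Matrix.one_mulVec] using this]
      rw [dot_self_eq x', dot_self_eq y, hx'1, hy1, hdconj]
      rw [hnf]
      simp only [Complex.conj_ofReal]
      have hd : d0 + (starRingEnd ℂ) d0 = ((2 * σ : ℝ) : ℂ) := by
        rw [hσ]
        rw [Complex.ext_iff]
        constructor
        · simp [Complex.add_re, Complex.conj_re]; ring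
        · simp [Complex.add_im, Complex.conj_im]
      push_cast
      push_cast at hd
      linear_combination ((1-(s:ℂ))*(s:ℂ)) * hd
    have h2 := dot_self_eq (v s)
    rw [h1] at h2
    exact_mod_cast (Complex.ofReal_inj.mp h2.symm)
  have hqv : ∀ s : ℝ, dotProduct (star (v s)) (A.mulVec (v s))
      = (((1 - s) ^ 2 + ρ * (s * (1 - s)) : ℝ) : ℂ) := by
    intro s
    rw [hv]
    simp only
    rw [qf_expand, hqx', hqy]
    simp only [Complex.conj_ofReal, mul_zero, mul_one]
    have : ((1-s:ℝ):ℂ) * ((s:ℝ):ℂ) * dotProduct (star x') (A.mulVec y)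
        + ((s:ℝ):ℂ) * ((1-s:ℝ):ℂ) * dotProduct (star y) (A.mulVec x')
        = ((s * (1-s) : ℝ) : ℂ) * c₀ := by
      rw [hc₀]; push_cast; ring
    push_cast
    push_cast at this
    rw [hρ] at this
    push_cast at this
    linear_combination this
  -- positivity of nf on [0,1]
  have hnfpos : ∀ s : ℝ, 0 ≤ s → s ≤ 1 → 0 < nf s := by
    intro s hs0 hs1
    rcases lt_or_ge 0 (nf s) with h | h
    · exact h
    · exfalso
      have hge : (0:ℝ) ≤ ∑ i, ‖v s i‖ ^ 2 :=
        Finset.sum_nonneg fun i _ => sq_nonneg _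
      have heq : nf s = 0 := le_antisymm h (by rw [← hvnorm s]; exact hge)
      have hzero : ∀ i, v s i = 0 := by
        intro i
        have := (Finset.sum_eq_zero_iff_of_nonneg
          (fun i (_ : i ∈ Finset.univ) => sq_nonneg ‖v s i‖)).mp
          (by rw [hvnorm s, heq]) i (Finset.mem_univ i)
        have : ‖v s i‖ = 0 := by nlinarith [norm_nonneg (v s i)]
        exact norm_eq_zero.mp this
      by_cases hs : s = 0
      · have : v 0 = x' := by
          rw [hv]; funext i; simp
        rw [hs] at hzero
        have : (1:ℝ) = 0 := by
          rw [← hx'1]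
          rw [show x' = v 0 from this.symm]
          simp [hzero]
        norm_num at this
      · have hsne : ((s:ℝ):ℂ) ≠ 0 := by exact_mod_cast hs
        set μ : ℂ := -(((1 - s : ℝ):ℂ) / ((s:ℝ):ℂ)) with hμ
        have hyx : y = μ • x' := by
          funext i
          have h0 := hzero i
          rw [hv] at h0
          simp only [Pi.add_apply, Pi.smul_apply, smul_eq_mul] at h0
          rw [hμ]
          simp only [Pi.smul_apply, smul_eq_mul]
          push_cast at h0 ⊢
          field_simp
          linear_combination h0
        have : (0 : ℂ) = (starRingEnd ℂ) μ * μ := by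
          rw [← hqy, hyx]
          rw [show (μ • x' : Fin N → ℂ) = μ • x' + (0:ℂ) • y by simp]
          rw [qf_expand, hqx', hqy]
          simp
        have hμ0 : μ = 0 := by
          have h2 : Complex.normSq μ = 0 := by
            have := this
            rw [mul_comm, Complex.mul_conj] at this
            exact_mod_cast this.symm
          exact Complex.normSq_eq_zero.mp h2
        have h1s : (1 - s : ℝ) = 0 := by
          rw [hμ] at hμ0
          have := neg_eq_zero.mp hμ0
          have := div_eq_zero_iff.mp this
          rcases this with h | h
          · exact_mod_cast h
          · exact absurd h hsne
        -- s = 1, so v 1 = y = μ • x' = 0, contradicting hy1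
        have : (1:ℝ) = 0 := by
          rw [← hy1, hyx, hμ0]
          simp
        norm_num at this
  -- IVT
  set Q : ℝ → ℝ := fun s => (1 - s) ^ 2 + ρ * (s * (1 - s)) - t * nf s with hQ
  have hQcont : ContinuousOn Q (Set.Icc 0 1) := by
    apply Continuous.continuousOn
    rw [hQ, hnf]
    fun_prop
  have hQ0 : Q 0 = 1 - t := by rw [hQ, hnf]; simp
  have hQ1 : Q 1 = -t := by rw [hQ, hnf]; simp
  have hmem : (0:ℝ) ∈ Set.Icc (Q 1) (Q 0) := by
    rw [hQ0, hQ1]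
    constructor <;> simp <;> linarith
  obtain ⟨s, hs, hQs⟩ := intermediate_value_Icc' zero_le_one hQcont hmem
  have hnfs := hnfpos s hs.1 hs.2
  refine ⟨((Real.sqrt (nf s))⁻¹ : ℝ) • v s, ?_, ?_⟩
  · have : ∀ i, ‖(((Real.sqrt (nf s))⁻¹ : ℝ) • v s) i‖ ^ 2
        = ((Real.sqrt (nf s))⁻¹)^2 * ‖v s i‖ ^ 2 := by
      intro i
      simp [norm_smul, mul_pow, _root_.abs_of_nonneg (inv_nonneg.mpr (Real.sqrt_nonneg _))]
    rw [Finset.sum_congr rfl (fun i _ => this i), ← Finset.mul_sum, hvnorm s]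
    rw [← Real.sqrt_inv]
    rw [Real.sq_sqrt (inv_nonneg.mpr hnfs.le)]
    field_simp
  · have hsm : (((Real.sqrt (nf s))⁻¹ : ℝ) • v s : Fin N → ℂ)
        = (((Real.sqrt (nf s))⁻¹ : ℝ) : ℂ) • v s := by
      funext i; simp [Complex.real_smul]
    rw [hsm]
    rw [show ((((Real.sqrt (nf s))⁻¹ : ℝ) : ℂ) • v s : Fin N → ℂ)
        = (((Real.sqrt (nf s))⁻¹ : ℝ) : ℂ) • v s + (0:ℂ) • y by simp]
    rw [qf_expand, hqv s]
    simp only [Complex.conj_ofReal, mul_zero, zero_mul, add_zero, map_zero]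
    have hQs2 : (1 - s)^2 + ρ * (s * (1-s)) - t * nf s = 0 := by
      have := hQs; rw [hQ] at this; simpa using this
    have hQs' : (1 - s)^2 + ρ * (s * (1-s)) = t * nf s := by linarith
    rw [hQs']
    have hmul : (((Real.sqrt (nf s))⁻¹ : ℝ) : ℂ) * (((Real.sqrt (nf s))⁻¹ : ℝ) : ℂ)
        = (((nf s)⁻¹ : ℝ) : ℂ) := by
      rw [← Complex.ofReal_mul]
      congr 1
      rw [← mul_inv, Real.mul_self_sqrt hnfs.le]
    rw [hmul]
    have hne : ((nf s : ℝ) : ℂ) ≠ 0 := by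
      exact_mod_cast hnfs.ne'
    push_cast
    field_simp


theorem convex_mNumRange (M : Matrix (Fin N) (Fin N) ℂ) : Convex ℝ (mNumRange M) := by
  rintro z1 hz1 z2 hz2 a b ha hb hab
  by_cases hz : z1 = z2
  · subst hz
    have : a • z1 + b • z1 = z1 := by
      rw [← add_smul, hab, one_smul]
    rw [this]; exact hz1
  · obtain ⟨x, hx1, hxq⟩ := hz1
    obtain ⟨y, hy1, hyq⟩ := hz2
    set A : Matrix (Fin N) (Fin N) ℂ := (z1 - z2)⁻¹ • (M - z2 • (1 : Matrix (Fin N) (Fin N) ℂ))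
      with hA
    have hsub : z1 - z2 ≠ 0 := sub_ne_zero.mpr hz
    have hqgen : ∀ v : Fin N → ℂ, (∑ i, ‖v i‖ ^ 2) = 1 →
        dotProduct (star v) (A.mulVec v)
          = (z1 - z2)⁻¹ * (dotProduct (star v) (M.mulVec v) - z2) := by
      intro v hv
      rw [hA]
      rw [Matrix.smul_mulVec, dotProduct_smul, Matrix.sub_mulVec,
        dotProduct_sub, Matrix.smul_mulVec, Matrix.one_mulVec,
        dotProduct_smul, dot_self_eq v, hv]
      simp
    have hAx : dotProduct (star x) (A.mulVec x) = 1 := by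
      rw [hqgen x hx1, ← hxq, inv_mul_cancel₀ hsub]
    have hAy : dotProduct (star y) (A.mulVec y) = 0 := by
      rw [hqgen y hy1, ← hyq]; simp
    have hb' : b = 1 - a := by linarith
    obtain ⟨v, hv1, hvq⟩ := key_segment A x y hx1 hy1 hAx hAy a ha (by linarith)
    refine ⟨v, hv1, ?_⟩
    have := hqgen v hv1
    rw [hvq] at this
    have : dotProduct (star v) (M.mulVec v) = z2 + (a : ℂ) * (z1 - z2) := by
      rw [this, mul_comm ((z1 - z2)⁻¹) _, mul_assoc, inv_mul_cancel₀ hsub, mul_one]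
      ring
    rw [this, hb']
    simp only [Complex.real_smul]
    push_cast
    ring

end NRAux

theorem isClosed_mNumRange {N : ℕ} (M : Matrix (Fin N) (Fin N) ℂ) :
    IsClosed (mNumRange M) := by
  unfold mNumRange
  have hcont : Continuous fun x : Fin N → ℂ => dotProduct (star x) (M.mulVec x) := by
    simp only [dotProduct, Matrix.mulVec, Pi.star_apply]
    fun_prop
  have hK : IsCompact {x : Fin N → ℂ | (∑ i, ‖x i‖ ^ 2) = 1} := by
    have hclosed : IsClosed {x : Fin N → ℂ | (∑ i, ‖x i‖ ^ 2) = 1} := by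
      have : Continuous fun x : Fin N → ℂ => ∑ i, ‖x i‖ ^ 2 := by fun_prop
      exact isClosed_eq this continuous_const
    have hsub : {x : Fin N → ℂ | (∑ i, ‖x i‖ ^ 2) = 1} ⊆ Metric.closedBall 0 1 := by
      intro x hx
      simp only [Metric.mem_closedBall, dist_zero_right]
      rw [pi_norm_le_iff_of_nonneg zero_le_one]
      intro i
      have h1 : ‖x i‖ ^ 2 ≤ ∑ j, ‖x j‖ ^ 2 :=
        Finset.single_le_sum (fun j _ => sq_nonneg ‖x j‖) (Finset.mem_univ i)
      rw [hx] at h1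
      nlinarith [norm_nonneg (x i)]
    exact (isCompact_closedBall 0 1).of_isClosed_subset hclosed hsub
  have himg : {z | ∃ x : Fin N → ℂ, (∑ i, ‖x i‖ ^ 2) = 1 ∧
      z = dotProduct (star x) (M.mulVec x)}
      = (fun x : Fin N → ℂ => dotProduct (star x) (M.mulVec x)) ''
        {x : Fin N → ℂ | (∑ i, ‖x i‖ ^ 2) = 1} := by
    ext z
    simp only [Set.mem_setOf_eq, Set.mem_image]
    constructor
    · rintro ⟨x, hx, rfl⟩; exact ⟨x, hx, rfl⟩
    · rintro ⟨x, hx, rfl⟩; exact ⟨x, hx, rfl⟩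
  rw [himg]
  exact (hK.image hcont).isClosed

namespace NRComp

open Finset

/-- natural-index version of the `B` matrix entries -/
noncomputable def bnat (j m : ℕ) : ℝ :=
  (-1 : ℝ) ^ m * (if j < m then 1 else if m < j then -1 else 0)

/-- the test vector entries (natural index) -/
noncomputable def Xc (k0 : ℕ) (β γ : ℝ) (n : ℕ) : ℂ :=
  if Even n then (((n : ℝ) - (k0 : ℝ) : ℝ) : ℂ) + (γ : ℂ) * Complex.I else (β : ℂ)

lemma Xc_even (k0 : ℕ) (β γ : ℝ) (r : ℕ) :
    Xc k0 β γ (2*r) = ((2*(r:ℝ) - (k0:ℝ) : ℝ) : ℂ) + (γ : ℂ) * Complex.I := by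
  rw [Xc, if_pos ⟨r, by ring⟩]
  push_cast
  ring

lemma Xc_odd (k0 : ℕ) (β γ : ℝ) (r : ℕ) :
    Xc k0 β γ (2*r+1) = (β : ℂ) := by
  rw [Xc, if_neg (by simp [Nat.even_add_one, parity_simps])]

lemma conj_Xc_even (k0 : ℕ) (β γ : ℝ) (r : ℕ) :
    (starRingEnd ℂ) (Xc k0 β γ (2*r))
      = ((2*(r:ℝ) - (k0:ℝ) : ℝ) : ℂ) - (γ : ℂ) * Complex.I := by
  rw [Xc_even, map_add, _root_.map_mul, Complex.conj_ofReal, Complex.conj_ofReal,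
    Complex.conj_I]
  ring

lemma conj_Xc_odd (k0 : ℕ) (β γ : ℝ) (r : ℕ) :
    (starRingEnd ℂ) (Xc k0 β γ (2*r+1)) = (β : ℂ) := by
  rw [Xc_odd, Complex.conj_ofReal]

/-- bnat at even-even indices -/
lemma bnat_ee (r s : ℕ) :
    ((bnat (2*r) (2*s) : ℝ) : ℂ)
      = (if r < s then (1:ℂ) else if s < r then -1 else 0) := by
  rw [bnat]
  rw [show ((-1:ℝ)) ^ (2*s) = 1 from by
    rw [pow_mul]; norm_num]
  rw [one_mul]
  rcases lt_trichotomy r s with h | h | h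
  · rw [if_pos (by omega), if_pos h]; norm_num
  · rw [if_neg (by omega), if_neg (by omega), if_neg (by omega), if_neg (by omega)]
    norm_num
  · rw [if_neg (by omega), if_pos (by omega), if_neg (by omega), if_pos h]
    norm_num

lemma bnat_eo (r s : ℕ) :
    ((bnat (2*r) (2*s+1) : ℝ) : ℂ) = -(if r ≤ s then (1:ℂ) else -1) := by
  rw [bnat]
  rw [show ((-1:ℝ)) ^ (2*s+1) = -1 from by
    rw [pow_succ, pow_mul]; norm_num]
  by_cases h : r ≤ s
  · rw [if_pos (by omega), if_pos h]; norm_num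
  · rw [if_neg (by omega), if_pos (by omega), if_neg h]; norm_num

lemma bnat_oe (r s : ℕ) :
    ((bnat (2*r+1) (2*s) : ℝ) : ℂ) = (if r < s then (1:ℂ) else -1) := by
  rw [bnat]
  rw [show ((-1:ℝ)) ^ (2*s) = 1 from by rw [pow_mul]; norm_num]
  rw [one_mul]
  by_cases h : r < s
  · rw [if_pos (by omega), if_pos h]; norm_num
  · rw [if_neg (by omega), if_pos (by omega), if_neg h]; norm_num

lemma bnat_oo (r s : ℕ) :
    ((bnat (2*r+1) (2*s+1) : ℝ) : ℂ)
      = -(if r < s then (1:ℂ) else if s < r then -1 else 0) := by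
  rw [bnat]
  rw [show ((-1:ℝ)) ^ (2*s+1) = -1 from by rw [pow_succ, pow_mul]; norm_num]
  rcases lt_trichotomy r s with h | h | h
  · rw [if_pos (by omega), if_pos h]; norm_num
  · rw [if_neg (by omega), if_neg (by omega), if_neg (by omega), if_neg (by omega)]
    norm_num
  · rw [if_neg (by omega), if_pos (by omega), if_neg (by omega), if_pos h]
    norm_num

/-- splitting a sum over `range (2k+1)` by parity -/
lemma sum_parity {M : Type*} [AddCommMonoid M] (f : ℕ → M) (k : ℕ) :
    ∑ n ∈ range (2*k+1), f n
      = (∑ r ∈ range (k+1), f (2*r)) + ∑ r ∈ range k, f (2*r+1) := by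
  induction k with
  | zero => simp
  | succ k ih =>
      rw [show 2*(k+1)+1 = (2*k+1) + 1 + 1 from by ring, sum_range_succ, sum_range_succ, ih,
        sum_range_succ (fun r => f (2*r)) (k+1), sum_range_succ (fun r => f (2*r+1)) k,
        show 2*(k+1) = 2*k+1+1 from by ring]
      abel

lemma sum_point (f : ℕ → ℂ) (r M : ℕ) (h : r < M) :
    ∑ s ∈ range M, (if s = r then f s else 0) = f r := by
  rw [Finset.sum_ite_eq' (range M) r f, if_pos (mem_range.mpr h)]

lemma sum_indic (f : ℕ → ℂ) (r M : ℕ) (h : r ≤ M) :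
    ∑ s ∈ range M, (if s < r then f s else 0) = ∑ s ∈ range r, f s := by
  have h1 : ∑ s ∈ range r, (if s < r then f s else 0) = ∑ s ∈ range r, f s :=
    sum_congr rfl fun s hs => if_pos (mem_range.mp hs)
  rw [← h1]
  exact (Finset.sum_subset (range_subset_range.mpr h)
    (fun x _ hnx => if_neg (by simpa using hnx))).symm

lemma sum_sgno (f : ℕ → ℂ) (r M : ℕ) (h : r < M) :
    ∑ s ∈ range M, (if r < s then (1:ℂ) else -1) * f s
      = (∑ s ∈ range M, f s) - 2 * ∑ s ∈ range (r+1), f s := by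
  have key : ∀ s, (if r < s then (1:ℂ) else -1) * f s
      = f s - 2*(if s < r+1 then f s else 0) := by
    intro s
    by_cases hc : r < s
    · rw [if_pos hc, if_neg (by omega)]; ring
    · rw [if_neg hc, if_pos (by omega)]; ring
  rw [sum_congr rfl fun s _ => key s, Finset.sum_sub_distrib, ← Finset.mul_sum,
    sum_indic f (r+1) M (by omega)]

lemma sum_sgne (f : ℕ → ℂ) (r M : ℕ) (h : r ≤ M) :
    ∑ s ∈ range M, (if r ≤ s then (1:ℂ) else -1) * f s
      = (∑ s ∈ range M, f s) - 2 * ∑ s ∈ range r, f s := by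
  have key : ∀ s, (if r ≤ s then (1:ℂ) else -1) * f s
      = f s - 2*(if s < r then f s else 0) := by
    intro s
    by_cases hc : r ≤ s
    · rw [if_pos hc, if_neg (by omega)]; ring
    · rw [if_neg hc, if_pos (by omega)]; ring
  rw [sum_congr rfl fun s _ => key s, Finset.sum_sub_distrib, ← Finset.mul_sum,
    sum_indic f r M h]

lemma sum_sgnn (f : ℕ → ℂ) (r M : ℕ) (h : r < M) :
    ∑ s ∈ range M, (if r < s then (1:ℂ) else if s < r then -1 else 0) * f s
      = (∑ s ∈ range M, f s) - 2 * (∑ s ∈ range (r+1), f s) + f r := by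
  have key : ∀ s, (if r < s then (1:ℂ) else if s < r then -1 else 0) * f s
      = (if r < s then (1:ℂ) else -1) * f s + (if s = r then f s else 0) := by
    intro s
    rcases lt_trichotomy r s with hc | hc | hc
    · rw [if_pos hc, if_pos hc, if_neg (by omega)]; ring
    · rw [if_neg (by omega), if_neg (by omega), if_neg (by omega), if_pos (by omega)]; ring
    · rw [if_neg (by omega), if_pos hc, if_neg (by omega), if_neg (by omega)]; ring
  rw [sum_congr rfl fun s _ => key s, Finset.sum_add_distrib, sum_sgno f r M h,
    sum_point f r M h]

lemma Xe_prefix (k0 : ℕ) (γ : ℝ) (M : ℕ) :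
    ∑ s ∈ range M, (((2*(s:ℝ) - (k0:ℝ) : ℝ) : ℂ) + (γ : ℂ) * Complex.I)
      = ((M:ℂ)*((M:ℂ)-1) - (k0:ℂ)*(M:ℂ)) + (M:ℂ)*(γ:ℂ)*Complex.I := by
  induction M with
  | zero => simp
  | succ M ih => rw [sum_range_succ, ih]; push_cast; ring

/-! ### block sums, proved by induction -/

lemma blk_ee (k0 : ℕ) (γ : ℝ) (M : ℕ) :
    ∑ r ∈ range M,
      ( (2*(r:ℂ) - (k0:ℂ)) - (γ:ℂ)*Complex.I ) *
      ( ((k0:ℂ)+1)*(γ:ℂ)*Complex.I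
        - 2*( ((r:ℂ)+1)*(r:ℂ) - (k0:ℂ)*((r:ℂ)+1) + ((r:ℂ)+1)*(γ:ℂ)*Complex.I )
        + ( 2*(r:ℂ) - (k0:ℂ) + (γ:ℂ)*Complex.I ) )
    = (-1/3)*(M:ℂ)*(γ:ℂ)*Complex.I - (M:ℂ)*(γ:ℂ)^2*Complex.I^2 - (M:ℂ)^2
      + (M:ℂ)^2*(γ:ℂ)*Complex.I + (M:ℂ)^2*(γ:ℂ)^2*Complex.I^2 + 2*(M:ℂ)^3
      - (2/3)*(M:ℂ)^3*(γ:ℂ)*Complex.I - (M:ℂ)^4 - 2*(k0:ℂ)*(M:ℂ)*(γ:ℂ)*Complex.I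
      - (k0:ℂ)*(M:ℂ)*(γ:ℂ)^2*Complex.I^2 - 2*(k0:ℂ)*(M:ℂ)^2
      + (k0:ℂ)*(M:ℂ)^2*(γ:ℂ)*Complex.I + 2*(k0:ℂ)*(M:ℂ)^3
      - (k0:ℂ)^2*(M:ℂ)*(γ:ℂ)*Complex.I - (k0:ℂ)^2*(M:ℂ)^2 := by
  induction M with
  | zero => simp
  | succ M ih => rw [sum_range_succ, ih]; push_cast; ring

lemma blk_eo (k0 : ℕ) (β γ : ℝ) (M : ℕ) :
    ∑ r ∈ range M,
      ( (2*(r:ℂ) - (k0:ℂ)) - (γ:ℂ)*Complex.I ) * ( -(β:ℂ)*((k0:ℂ) - 2*(r:ℂ)) )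
    = (2/3)*(M:ℂ)*(β:ℂ) + (M:ℂ)*(γ:ℂ)*Complex.I*(β:ℂ) - 2*(M:ℂ)^2*(β:ℂ)
      - (M:ℂ)^2*(γ:ℂ)*Complex.I*(β:ℂ) + (4/3)*(M:ℂ)^3*(β:ℂ) + 2*(k0:ℂ)*(M:ℂ)*(β:ℂ)
      + (k0:ℂ)*(M:ℂ)*(γ:ℂ)*Complex.I*(β:ℂ) - 2*(k0:ℂ)*(M:ℂ)^2*(β:ℂ)
      + (k0:ℂ)^2*(M:ℂ)*(β:ℂ) := by
  induction M with
  | zero => simp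
  | succ M ih => rw [sum_range_succ, ih]; push_cast; ring

lemma blk_oe (k0 : ℕ) (β γ : ℝ) (M : ℕ) :
    ∑ r ∈ range M,
      (β:ℂ) * ( ((k0:ℂ)+1)*(γ:ℂ)*Complex.I
        - 2*( ((r:ℂ)+1)*(r:ℂ) - (k0:ℂ)*((r:ℂ)+1) + ((r:ℂ)+1)*(γ:ℂ)*Complex.I ) )
    = (2/3)*(M:ℂ)*(β:ℂ) - (M:ℂ)^2*(γ:ℂ)*Complex.I*(β:ℂ) - (2/3)*(M:ℂ)^3*(β:ℂ)
      + (k0:ℂ)*(M:ℂ)*(β:ℂ) + (k0:ℂ)*(M:ℂ)*(γ:ℂ)*Complex.I*(β:ℂ)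
      + (k0:ℂ)*(M:ℂ)^2*(β:ℂ) := by
  induction M with
  | zero => simp
  | succ M ih => rw [sum_range_succ, ih]; push_cast; ring

lemma blk_oo (k0 : ℕ) (β : ℝ) (M : ℕ) :
    ∑ r ∈ range M, (β:ℂ) * ( -(β:ℂ)*((k0:ℂ) - 2*(r:ℂ) - 1) )
    = (M:ℂ)^2*(β:ℂ)^2 - (k0:ℂ)*(M:ℂ)*(β:ℂ)^2 := by
  induction M with
  | zero => simp
  | succ M ih => rw [sum_range_succ, ih]; push_cast; ring

lemma blkR (k0 : ℕ) (γ : ℝ) (M : ℕ) :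
    ∑ r ∈ range M, ((2*(r:ℝ) - (k0:ℝ))^2 + γ^2)
    = (2/3)*(2*(M:ℝ)^3 - 3*(M:ℝ)^2 + (M:ℝ)) - 2*(k0:ℝ)*(M:ℝ)^2 + 2*(k0:ℝ)*(M:ℝ)
      + (k0:ℝ)^2*(M:ℝ) + γ^2*(M:ℝ) := by
  induction M with
  | zero => simp
  | succ M ih => rw [sum_range_succ, ih]; push_cast; ring

/-- The central computation: the quadratic form of `B` on the test vector. -/
lemma qB_val (k0 : ℕ) (β γ : ℝ) :
    ∑ j ∈ range (2*k0+1), ∑ m ∈ range (2*k0+1),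
      (starRingEnd ℂ) (Xc k0 β γ j) * ((bnat j m : ℝ) : ℂ) * Xc k0 β γ m
    = 2*(((k0:ℂ)*((k0:ℂ)+1)*((k0:ℂ)+2))/3)*(β:ℂ)
      - 2*(((k0:ℂ)*((k0:ℂ)+1)*((k0:ℂ)+2))/3)*(γ:ℂ)*Complex.I := by
  rw [sum_parity (fun j => ∑ m ∈ range (2*k0+1),
      (starRingEnd ℂ) (Xc k0 β γ j) * ((bnat j m : ℝ) : ℂ) * Xc k0 β γ m) k0]
  have inner_split : ∀ j : ℕ,
      ∑ m ∈ range (2*k0+1), (starRingEnd ℂ) (Xc k0 β γ j) * ((bnat j m : ℝ) : ℂ) * Xc k0 β γ m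
      = (∑ s ∈ range (k0+1),
          (starRingEnd ℂ) (Xc k0 β γ j) * ((bnat j (2*s) : ℝ) : ℂ) * Xc k0 β γ (2*s))
        + ∑ s ∈ range k0,
          (starRingEnd ℂ) (Xc k0 β γ j) * ((bnat j (2*s+1) : ℝ) : ℂ) * Xc k0 β γ (2*s+1) :=
    fun j => sum_parity
      (fun m => (starRingEnd ℂ) (Xc k0 β γ j) * ((bnat j m : ℝ) : ℂ) * Xc k0 β γ m) k0
  rw [sum_congr rfl fun r _ => inner_split (2*r), sum_congr rfl fun r _ => inner_split (2*r+1),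
    Finset.sum_add_distrib, Finset.sum_add_distrib]
  -- evaluate the four blocks
  have Dee : ∑ r ∈ range (k0+1), ∑ s ∈ range (k0+1),
      (starRingEnd ℂ) (Xc k0 β γ (2*r)) * ((bnat (2*r) (2*s) : ℝ) : ℂ) * Xc k0 β γ (2*s)
      = ∑ r ∈ range (k0+1),
        ( (2*(r:ℂ) - (k0:ℂ)) - (γ:ℂ)*Complex.I ) *
        ( ((k0:ℂ)+1)*(γ:ℂ)*Complex.I
          - 2*( ((r:ℂ)+1)*(r:ℂ) - (k0:ℂ)*((r:ℂ)+1) + ((r:ℂ)+1)*(γ:ℂ)*Complex.I )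
          + ( 2*(r:ℂ) - (k0:ℂ) + (γ:ℂ)*Complex.I ) ) := by
    refine sum_congr rfl fun r hr => ?_
    have hr' : r < k0 + 1 := mem_range.mp hr
    have h1 : ∀ s : ℕ,
        (starRingEnd ℂ) (Xc k0 β γ (2*r)) * ((bnat (2*r) (2*s) : ℝ) : ℂ) * Xc k0 β γ (2*s)
        = (starRingEnd ℂ) (Xc k0 β γ (2*r)) *
          ((if r < s then (1:ℂ) else if s < r then -1 else 0) *
            (((2*(s:ℝ) - (k0:ℝ) : ℝ) : ℂ) + (γ : ℂ) * Complex.I)) := by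
      intro s
      rw [bnat_ee, Xc_even k0 β γ s]
      ring
    rw [sum_congr rfl fun s _ => h1 s, ← Finset.mul_sum,
      sum_sgnn (fun s => (((2*(s:ℝ) - (k0:ℝ) : ℝ) : ℂ) + (γ : ℂ) * Complex.I)) r (k0+1) hr',
      Xe_prefix, Xe_prefix, conj_Xc_even]
    push_cast
    ring
  have Deo : ∑ r ∈ range (k0+1), ∑ s ∈ range k0,
      (starRingEnd ℂ) (Xc k0 β γ (2*r)) * ((bnat (2*r) (2*s+1) : ℝ) : ℂ) * Xc k0 β γ (2*s+1)
      = ∑ r ∈ range (k0+1),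
        ( (2*(r:ℂ) - (k0:ℂ)) - (γ:ℂ)*Complex.I ) * ( -(β:ℂ)*((k0:ℂ) - 2*(r:ℂ)) ) := by
    refine sum_congr rfl fun r hr => ?_
    have hr' : r ≤ k0 := by have := mem_range.mp hr; omega
    have h1 : ∀ s : ℕ,
        (starRingEnd ℂ) (Xc k0 β γ (2*r)) * ((bnat (2*r) (2*s+1) : ℝ) : ℂ) * Xc k0 β γ (2*s+1)
        = ((starRingEnd ℂ) (Xc k0 β γ (2*r)) * (-(β:ℂ))) *
          ((if r ≤ s then (1:ℂ) else -1) * 1) := by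
      intro s
      rw [bnat_eo, Xc_odd k0 β γ s]
      ring
    rw [sum_congr rfl fun s _ => h1 s, ← Finset.mul_sum,
      sum_sgne (fun _ => (1:ℂ)) r k0 hr']
    rw [conj_Xc_even]
    simp only [Finset.sum_const, card_range, nsmul_eq_mul, mul_one]
    push_cast
    ring
  have Doe : ∑ r ∈ range k0, ∑ s ∈ range (k0+1),
      (starRingEnd ℂ) (Xc k0 β γ (2*r+1)) * ((bnat (2*r+1) (2*s) : ℝ) : ℂ) * Xc k0 β γ (2*s)
      = ∑ r ∈ range k0,
        (β:ℂ) * ( ((k0:ℂ)+1)*(γ:ℂ)*Complex.I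
          - 2*( ((r:ℂ)+1)*(r:ℂ) - (k0:ℂ)*((r:ℂ)+1) + ((r:ℂ)+1)*(γ:ℂ)*Complex.I ) ) := by
    refine sum_congr rfl fun r hr => ?_
    have hr' : r < k0 + 1 := by have := mem_range.mp hr; omega
    have h1 : ∀ s : ℕ,
        (starRingEnd ℂ) (Xc k0 β γ (2*r+1)) * ((bnat (2*r+1) (2*s) : ℝ) : ℂ) * Xc k0 β γ (2*s)
        = (starRingEnd ℂ) (Xc k0 β γ (2*r+1)) *
          ((if r < s then (1:ℂ) else -1) *
            (((2*(s:ℝ) - (k0:ℝ) : ℝ) : ℂ) + (γ : ℂ) * Complex.I)) := by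
      intro s
      rw [bnat_oe, Xc_even k0 β γ s]
      ring
    rw [sum_congr rfl fun s _ => h1 s, ← Finset.mul_sum,
      sum_sgno (fun s => (((2*(s:ℝ) - (k0:ℝ) : ℝ) : ℂ) + (γ : ℂ) * Complex.I)) r (k0+1) hr',
      Xe_prefix, Xe_prefix, conj_Xc_odd]
    push_cast
    ring
  have Doo : ∑ r ∈ range k0, ∑ s ∈ range k0,
      (starRingEnd ℂ) (Xc k0 β γ (2*r+1)) * ((bnat (2*r+1) (2*s+1) : ℝ) : ℂ) * Xc k0 β γ (2*s+1)
      = ∑ r ∈ range k0, (β:ℂ) * ( -(β:ℂ)*((k0:ℂ) - 2*(r:ℂ) - 1) ) := by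
    refine sum_congr rfl fun r hr => ?_
    have hr' : r < k0 := mem_range.mp hr
    have h1 : ∀ s : ℕ,
        (starRingEnd ℂ) (Xc k0 β γ (2*r+1)) * ((bnat (2*r+1) (2*s+1) : ℝ) : ℂ) * Xc k0 β γ (2*s+1)
        = ((starRingEnd ℂ) (Xc k0 β γ (2*r+1)) * (-(β:ℂ))) *
          ((if r < s then (1:ℂ) else if s < r then -1 else 0) * 1) := by
      intro s
      rw [bnat_oo, Xc_odd k0 β γ s]
      ring
    rw [sum_congr rfl fun s _ => h1 s, ← Finset.mul_sum,
      sum_sgnn (fun _ => (1:ℂ)) r k0 hr']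
    rw [conj_Xc_odd]
    simp only [Finset.sum_const, card_range, nsmul_eq_mul, mul_one]
    push_cast
    ring
  rw [Dee, Deo, Doe, Doo, blk_ee k0 γ (k0+1), blk_eo k0 β γ (k0+1), blk_oe k0 β γ k0,
    blk_oo k0 β k0]
  push_cast
  ring

/-- Norm of the test vector. -/
lemma norm_val (k0 : ℕ) (β γ : ℝ) :
    ∑ n ∈ range (2*k0+1), ‖Xc k0 β γ n‖^2
    = ((k0:ℝ)*((k0:ℝ)+1)*((k0:ℝ)+2))/3 + (k0:ℝ)*β^2 + ((k0:ℝ)+1)*γ^2 := by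
  rw [sum_parity (fun n => ‖Xc k0 β γ n‖^2) k0]
  have he : ∀ r : ℕ, ‖Xc k0 β γ (2*r)‖^2 = (2*(r:ℝ) - (k0:ℝ))^2 + γ^2 := by
    intro r
    rw [Xc_even, Complex.sq_norm, Complex.normSq_add_mul_I]
  have ho : ∀ r : ℕ, ‖Xc k0 β γ (2*r+1)‖^2 = β^2 := by
    intro r
    rw [Xc_odd, Complex.norm_real, Real.norm_eq_abs, _root_.sq_abs]
  rw [sum_congr rfl fun r _ => he r, sum_congr rfl fun r _ => ho r, blkR k0 γ (k0+1)]
  simp only [Finset.sum_const, card_range, nsmul_eq_mul]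
  push_cast
  ring

lemma bnat_diag (n : ℕ) : bnat n n = 0 := by simp [bnat]

lemma bnat_abs_le (j m : ℕ) : |bnat j m| ≤ 1 := by
  have h0 : |(-1:ℝ)^m| = 1 := by
    rw [_root_.abs_pow, abs_neg, abs_one, one_pow]
  rw [bnat, abs_mul, h0, one_mul]
  rcases lt_trichotomy j m with h | h | h
  · rw [if_pos h]; norm_num
  · rw [if_neg (by omega), if_neg (by omega)]; norm_num
  · rw [if_neg (by omega), if_pos h]; norm_num

lemma matB_eq {N : ℕ} (j m : Fin N) : matB N j m = bnat (j:ℕ) (m:ℕ) := by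
  rw [matB, bnat]
  congr 1
  · rw [pow_succ, pow_succ]; ring
  · rcases lt_trichotomy (j:ℕ) (m:ℕ) with h | h | h
    · rw [Real.sign_of_pos (by
        have : ((j:ℕ):ℝ) < ((m:ℕ):ℝ) := by exact_mod_cast h
        push_cast
        linarith), if_pos h]
    · rw [show ((((m : ℕ) + 1 : ℕ) : ℝ) - (((j : ℕ) + 1 : ℕ) : ℝ)) = 0 from by
        rw [h]; ring, Real.sign_zero, if_neg (by omega), if_neg (by omega)]
    · rw [Real.sign_of_neg (by
        have : ((m:ℕ):ℝ) < ((j:ℕ):ℝ) := by exact_mod_cast h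
        push_cast
        linarith), if_neg (by omega), if_pos h]

lemma qf_double {N : ℕ} (M : Matrix (Fin N) (Fin N) ℂ) (x : Fin N → ℂ) :
    dotProduct (star x) (M.mulVec x)
      = ∑ j : Fin N, ∑ m : Fin N, (starRingEnd ℂ) (x j) * M j m * x m := by
  simp only [dotProduct, Matrix.mulVec, Pi.star_apply, Complex.star_def,
    Finset.mul_sum]
  exact sum_congr rfl fun j _ => sum_congr rfl fun m _ => by ring

lemma qf_scale {N : ℕ} (M : Matrix (Fin N) (Fin N) ℂ) (x : Fin N → ℂ) (c : ℂ) :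
    dotProduct (star (c • x)) (M.mulVec (c • x))
      = (starRingEnd ℂ) c * c * dotProduct (star x) (M.mulVec x) := by
  rw [qf_double, qf_double, Finset.mul_sum]
  refine sum_congr rfl fun j _ => ?_
  rw [Finset.mul_sum]
  refine sum_congr rfl fun m _ => ?_
  simp only [Pi.smul_apply, smul_eq_mul, _root_.map_mul]
  ring

set_option maxHeartbeats 1600000 in
/-- The main construction: a support point of the numerical range with a
guaranteed component in the direction `(c, s)`. -/
lemma support_point (N k0 : ℕ) (hNk : N = 2*k0+1) (hk0 : 1 ≤ k0)
    (e : Fin N → Fin N → ℝ) (ε : ℝ) (hε : 0 < ε)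
    (hclose : ∀ j m : Fin N, |e j m - 1| ≤ ε / ((N:ℝ) - 1))
    (c s : ℝ) (hcs : c^2 + s^2 = 1) :
    ∃ w ∈ mNumRange ((matC N e).map Complex.ofReal),
      (s = 0 → w.im = 0) ∧
      Real.sqrt ((((k0:ℝ)*((k0:ℝ)+1)*((k0:ℝ)+2))/3) / ((k0:ℝ)*c^2 + ((k0:ℝ)+1)*s^2)) - ε
        ≤ c*w.re + s*w.im := by
  have hk0R : (1:ℝ) ≤ (k0:ℝ) := by exact_mod_cast hk0
  set Pr : ℝ := ((k0:ℝ)*((k0:ℝ)+1)*((k0:ℝ)+2))/3 with hPr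
  set Dd : ℝ := (k0:ℝ)*c^2 + ((k0:ℝ)+1)*s^2 with hDd
  have hk00 : (0:ℝ) < (k0:ℝ) := by linarith
  have hPrpos : 0 < Pr := by
    rw [hPr]
    have := mul_pos (mul_pos hk00 (show (0:ℝ) < (k0:ℝ)+1 by linarith))
      (show (0:ℝ) < (k0:ℝ)+2 by linarith)
    linarith
  have hDdpos : 0 < Dd := by rw [hDd]; nlinarith [sq_nonneg c, sq_nonneg s]
  set τ : ℝ := Real.sqrt (Pr / Dd) with hτ
  have hτpos : 0 < τ := Real.sqrt_pos.mpr (div_pos hPrpos hDdpos)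
  have hτsq : τ^2 = Pr / Dd := Real.sq_sqrt (div_pos hPrpos hDdpos).le
  set β : ℝ := τ*c with hβ
  set γ : ℝ := -(τ*s) with hγ
  set x : Fin N → ℂ := fun n => Xc k0 β γ (n:ℕ) with hx
  set Mc : Matrix (Fin N) (Fin N) ℂ := (matC N e).map Complex.ofReal with hMc
  -- total norm
  have hS : (∑ i, ‖x i‖^2) = 2*Pr := by
    rw [hx]
    rw [Fin.sum_univ_eq_sum_range (fun n => ‖Xc k0 β γ n‖^2) N, hNk, norm_val]
    have h1 : (k0:ℝ)*β^2 + ((k0:ℝ)+1)*γ^2 = τ^2 * Dd := by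
      rw [hβ, hγ, hDd]; ring
    have h2 : ((k0:ℝ)*((k0:ℝ)+1)*((k0:ℝ)+2))/3 = Pr := hPr.symm
    rw [show ((k0:ℝ)*((k0:ℝ)+1)*((k0:ℝ)+2))/3 + (k0:ℝ)*β^2 + ((k0:ℝ)+1)*γ^2
        = ((k0:ℝ)*((k0:ℝ)+1)*((k0:ℝ)+2))/3 + ((k0:ℝ)*β^2 + ((k0:ℝ)+1)*γ^2) from by ring,
      h1, hτsq, h2]
    field_simp
    try ring
  have hSpos : 0 < 2*Pr := by linarith
  -- quadratic form of C on x, split into B-part and perturbation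
  set qC : ℂ := dotProduct (star x) (Mc.mulVec x) with hqCdef
  set Δ : ℂ := ∑ j : Fin N, ∑ m : Fin N,
      (starRingEnd ℂ) (x j) * ((matB N j m * (e j m - 1) : ℝ):ℂ) * x m with hΔ
  have hqB : (∑ j : Fin N, ∑ m : Fin N,
      (starRingEnd ℂ) (x j) * ((matB N j m : ℝ):ℂ) * x m)
      = 2*((Pr:ℝ):ℂ)*(β:ℂ) - 2*((Pr:ℝ):ℂ)*(γ:ℂ)*Complex.I := by
    have h1 : ∀ j : Fin N, (∑ m : Fin N,
        (starRingEnd ℂ) (x j) * ((matB N j m : ℝ):ℂ) * x m)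
        = ∑ m ∈ range N, (starRingEnd ℂ) (Xc k0 β γ (j:ℕ)) * ((bnat (j:ℕ) m : ℝ):ℂ)
            * Xc k0 β γ m := by
      intro j
      rw [show (∑ m : Fin N, (starRingEnd ℂ) (x j) * ((matB N j m : ℝ):ℂ) * x m)
          = ∑ m : Fin N, (starRingEnd ℂ) (Xc k0 β γ (j:ℕ)) * ((bnat (j:ℕ) (m:ℕ) : ℝ):ℂ)
              * Xc k0 β γ (m:ℕ) from
        sum_congr rfl fun m _ => by rw [hx, matB_eq]]
      exact Fin.sum_univ_eq_sum_range
        (fun m => (starRingEnd ℂ) (Xc k0 β γ (j:ℕ)) * ((bnat (j:ℕ) m : ℝ):ℂ)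
          * Xc k0 β γ m) N
    rw [sum_congr rfl fun j _ => h1 j]
    rw [Fin.sum_univ_eq_sum_range (fun j => ∑ m ∈ range N,
      (starRingEnd ℂ) (Xc k0 β γ j) * ((bnat j m : ℝ):ℂ) * Xc k0 β γ m) N]
    rw [hNk, qB_val, hPr]
    push_cast
    ring
  have hsplit : qC = (2*((Pr:ℝ):ℂ)*(β:ℂ) - 2*((Pr:ℝ):ℂ)*(γ:ℂ)*Complex.I) + Δ := by
    rw [hqCdef, qf_double, ← hqB, hΔ, ← Finset.sum_add_distrib]
    refine sum_congr rfl fun j _ => ?_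
    rw [← Finset.sum_add_distrib]
    refine sum_congr rfl fun m _ => ?_
    rw [hMc]
    show (starRingEnd ℂ) (x j) * (((matC N e) j m : ℝ):ℂ) * x m = _
    rw [matC]
    push_cast
    ring
  -- bound on the perturbation
  have hNR : ((N:ℝ) - 1) = 2*(k0:ℝ) := by rw [hNk]; push_cast; ring
  have hNRpos : (0:ℝ) < (N:ℝ) - 1 := by rw [hNR]; linarith
  set δ : ℝ := ε / ((N:ℝ) - 1) with hδdef
  have hδpos : 0 ≤ δ := le_of_lt (div_pos hε hNRpos)
  have hterm : ∀ j m : Fin N,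
      ‖(starRingEnd ℂ) (x j) * ((matB N j m * (e j m - 1) : ℝ):ℂ) * x m‖
      ≤ (if j = m then 0 else ‖x j‖ * δ * ‖x m‖) := by
    intro j m
    rw [norm_mul, norm_mul]
    by_cases hjm : j = m
    · subst hjm
      rw [if_pos rfl]
      rw [show matB N j j = 0 from by rw [matB_eq, bnat_diag]]
      simp
    · rw [if_neg hjm]
      have h1 : ‖(starRingEnd ℂ) (x j)‖ = ‖x j‖ := by
        rw [Complex.norm_conj]
      have h3 : ‖(((matB N j m * (e j m - 1) : ℝ)):ℂ)‖ ≤ δ := by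
        rw [Complex.norm_real, Real.norm_eq_abs, abs_mul]
        have hb1 : |matB N j m| ≤ 1 := by rw [matB_eq]; exact bnat_abs_le _ _
        have hb2 : |e j m - 1| ≤ δ := hclose j m
        have := abs_nonneg (e j m - 1)
        nlinarith
      rw [h1]
      have hn1 : (0:ℝ) ≤ ‖x j‖ := norm_nonneg _
      have hn2 : (0:ℝ) ≤ ‖x m‖ := norm_nonneg _
      exact mul_le_mul_of_nonneg_right (mul_le_mul_of_nonneg_left h3 hn1) hn2
  have hΔbound : ‖Δ‖ ≤ ε * (2*Pr) := by
    have h1 : ‖Δ‖ ≤ ∑ j : Fin N, ∑ m : Fin N,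
        (if j = m then 0 else ‖x j‖ * δ * ‖x m‖) := by
      rw [hΔ]
      refine le_trans (norm_sum_le _ _) ?_
      refine Finset.sum_le_sum fun j _ => ?_
      refine le_trans (norm_sum_le _ _) ?_
      exact Finset.sum_le_sum fun m _ => hterm j m
    have h2 : ∀ j : Fin N, (∑ m : Fin N, (if j = m then 0 else ‖x j‖ * δ * ‖x m‖))
        = δ * (‖x j‖ * (∑ m : Fin N, ‖x m‖) - ‖x j‖^2) := by
      intro j
      have h3 : ∀ m : Fin N, (if j = m then 0 else ‖x j‖ * δ * ‖x m‖)
          = δ * (‖x j‖ * ‖x m‖) - (if j = m then δ * (‖x j‖ * ‖x m‖) else 0) := by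
        intro m
        by_cases hjm : j = m
        · subst hjm; rw [if_pos rfl, if_pos rfl]; ring
        · rw [if_neg hjm, if_neg hjm]; ring
      rw [sum_congr rfl fun m _ => h3 m, Finset.sum_sub_distrib]
      rw [Finset.sum_ite_eq Finset.univ j (fun m => δ * (‖x j‖ * ‖x m‖)),
        if_pos (Finset.mem_univ j)]
      rw [← Finset.mul_sum, ← Finset.mul_sum]
      ring
    rw [Finset.sum_congr rfl fun j _ => h2 j] at h1
    set T : ℝ := ∑ m : Fin N, ‖x m‖ with hT
    have h4 : (∑ j : Fin N, δ * (‖x j‖ * T - ‖x j‖^2)) = δ * (T^2 - 2*Pr) := by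
      rw [← Finset.mul_sum, Finset.sum_sub_distrib, ← Finset.sum_mul, ← hT, hS]
      ring
    rw [h4] at h1
    have hCS : T^2 ≤ (N:ℝ) * (2*Pr) := by
      have := Finset.sum_mul_sq_le_sq_mul_sq Finset.univ (fun _ : Fin N => (1:ℝ))
        (fun j => ‖x j‖)
      simp only [one_mul, one_pow] at this
      rw [Finset.sum_const, Finset.card_univ, Fintype.card_fin, nsmul_eq_mul, mul_one] at this
      calc T^2 = (∑ j : Fin N, ‖x j‖)^2 := by rw [hT]
        _ ≤ (N:ℝ) * ∑ j : Fin N, ‖x j‖^2 := by exact_mod_cast this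
        _ = (N:ℝ) * (2*Pr) := by rw [hS]
    calc ‖Δ‖ ≤ δ * (T^2 - 2*Pr) := h1
      _ ≤ δ * ((N:ℝ) * (2*Pr) - 2*Pr) := by
          have h5 : T^2 - 2*Pr ≤ (N:ℝ)*(2*Pr) - 2*Pr := by linarith
          exact mul_le_mul_of_nonneg_left h5 hδpos
      _ = δ * ((N:ℝ) - 1) * (2*Pr) := by ring
      _ = ε * (2*Pr) := by
          rw [hδdef]
          field_simp
  -- normalise and conclude
  set ν : ℝ := (Real.sqrt (2*Pr))⁻¹ with hν
  have hνpos : 0 < ν := by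
    rw [hν]
    exact inv_pos.mpr (Real.sqrt_pos.mpr hSpos)
  have hνsq : ν^2 = (2*Pr)⁻¹ := by
    rw [hν, ← Real.sqrt_inv, Real.sq_sqrt (inv_nonneg.mpr hSpos.le)]
  set xhat : Fin N → ℂ := ((ν:ℝ):ℂ) • x with hxhat
  have hxhat1 : (∑ i, ‖xhat i‖^2) = 1 := by
    rw [hxhat]
    have : ∀ i, ‖(((ν:ℝ):ℂ) • x) i‖^2 = ν^2 * ‖x i‖^2 := by
      intro i
      simp [norm_smul, mul_pow, Complex.norm_real, Real.norm_eq_abs, _root_.sq_abs]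
    rw [Finset.sum_congr rfl fun i _ => this i, ← Finset.mul_sum, hS, hνsq]
    field_simp
  set w : ℂ := dotProduct (star xhat) (Mc.mulVec xhat) with hw
  have hwval : w = (((2*Pr)⁻¹ : ℝ):ℂ) * qC := by
    rw [hw, hxhat, qf_scale, Complex.conj_ofReal, ← hqCdef, ← Complex.ofReal_mul, ← _root_.sq,
      hνsq]
  refine ⟨w, ⟨xhat, hxhat1, hw⟩, ?_, ?_⟩
  · -- reality when s = 0
    intro hs0
    have hγ0 : γ = 0 := by rw [hγ, hs0]; ring
    have hcx : ∀ i : Fin N, (starRingEnd ℂ) (x i) = x i := by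
      intro i
      rw [hx]
      show (starRingEnd ℂ) (Xc k0 β γ (i:ℕ)) = Xc k0 β γ (i:ℕ)
      rw [Xc, hγ0]
      split_ifs
      · simp [Complex.conj_ofReal]
      · simp [Complex.conj_ofReal]
    have hqCconj : (starRingEnd ℂ) qC = qC := by
      rw [hqCdef, qf_double, map_sum]
      refine sum_congr rfl fun j _ => ?_
      rw [map_sum]
      refine sum_congr rfl fun m _ => ?_
      have hmc : (starRingEnd ℂ) (Mc j m) = Mc j m := by
        rw [hMc]
        exact Complex.conj_ofReal _
      simp only [_root_.map_mul, Complex.conj_conj, hcx j, hcx m, hmc]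
    have : qC.im = 0 := by
      have := congrArg Complex.im hqCconj
      simp only [Complex.conj_im] at this
      linarith
    rw [hwval]
    simp [Complex.mul_im, this]
  · -- the support value
    have hqre : qC.re = 2*Pr*β + Δ.re := by
      rw [hsplit]
      simp [Complex.add_re, Complex.sub_re, Complex.mul_re, Complex.I_re, Complex.I_im,
        Complex.ofReal_re, Complex.ofReal_im]
    have hqim : qC.im = -(2*Pr*γ) + Δ.im := by
      rw [hsplit]
      simp [Complex.add_im, Complex.sub_im, Complex.mul_im, Complex.I_re, Complex.I_im,
        Complex.ofReal_re, Complex.ofReal_im]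
    have hwre : w.re = (2*Pr)⁻¹ * qC.re := by
      rw [hwval]; simp [Complex.mul_re]
    have hwim : w.im = (2*Pr)⁻¹ * qC.im := by
      rw [hwval]; simp [Complex.mul_im]
    have hcauchy : -‖Δ‖ ≤ c*Δ.re + s*Δ.im := by
      have h2 : (c*Δ.re + s*Δ.im)^2 ≤ ‖Δ‖^2 := by
        have habs : ‖Δ‖^2 = Δ.re^2 + Δ.im^2 := by
          rw [Complex.sq_norm, Complex.normSq_apply]; ring
        nlinarith [sq_nonneg (s*Δ.re - c*Δ.im)]
      nlinarith [norm_nonneg Δ, sq_nonneg (c*Δ.re + s*Δ.im + ‖Δ‖)]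
    have hval : c*w.re + s*w.im ≥ τ - ε := by
      rw [hwre, hwim, hqre, hqim]
      have hβγ : c*(2*Pr*β) + s*(-(2*Pr*γ)) = 2*Pr*τ := by
        rw [hβ, hγ]
        have : c*(2*Pr*(τ*c)) + s*(-(2*Pr*(-(τ*s)))) = 2*Pr*τ*(c^2+s^2) := by ring
        rw [this, hcs, mul_one]
      have hstep : c*(2*Pr*β + Δ.re) + s*(-(2*Pr*γ) + Δ.im)
          ≥ 2*Pr*τ - ε*(2*Pr) := by
        have : c*(2*Pr*β + Δ.re) + s*(-(2*Pr*γ) + Δ.im)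
            = (c*(2*Pr*β) + s*(-(2*Pr*γ))) + (c*Δ.re + s*Δ.im) := by ring
        rw [this, hβγ]
        have := hcauchy
        have := hΔbound
        linarith
      have h2Pr : (0:ℝ) < (2*Pr)⁻¹ := inv_pos.mpr hSpos
      calc c*((2*Pr)⁻¹*(2*Pr*β + Δ.re)) + s*((2*Pr)⁻¹*(-(2*Pr*γ) + Δ.im))
          = (2*Pr)⁻¹ * (c*(2*Pr*β + Δ.re) + s*(-(2*Pr*γ) + Δ.im)) := by ring
        _ ≥ (2*Pr)⁻¹ * (2*Pr*τ - ε*(2*Pr)) := by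
            exact mul_le_mul_of_nonneg_left hstep h2Pr.le
        _ = τ - ε := by
            have h2Pr0 : (2*Pr) ≠ 0 := ne_of_gt hSpos
            field_simp
    exact hval

end NRComp

open NRComp in
set_option maxHeartbeats 1600000 in
/-- For odd `N ≥ 3`, if `|e_{jm} − 1| ≤ ε/(N−1)` for all `j, m`, then
`{z : |z| ≤ √((N−1)/2) − ε} ⊆ W(C_N)` and
`[ε − √((N+1)/2), √((N+1)/2) − ε] ⊆ W(C_N)`. -/
theorem matC_numRange_contains_disc (N : ℕ) (hN : 3 ≤ N) (hodd : Odd N)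
    (e₀ : ℝ) (he₀ : 1 ≤ e₀)
    (e : Fin N → Fin N → ℝ) (he : ∀ j m, 0 < e j m ∧ e j m ≤ e₀)
    (ε : ℝ) (hε : 0 < ε)
    (hclose : ∀ j m : Fin N, |e j m - 1| ≤ ε / ((N : ℝ) - 1)) :
    {z : ℂ | ‖z‖ ≤ Real.sqrt (((N : ℝ) - 1) / 2) - ε} ⊆
      mNumRange ((matC N e).map Complex.ofReal) ∧
    Complex.ofReal '' Set.Icc (ε - Real.sqrt (((N : ℝ) + 1) / 2))
        (Real.sqrt (((N : ℝ) + 1) / 2) - ε) ⊆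
      mNumRange ((matC N e).map Complex.ofReal) := by
  obtain ⟨k0, hNk⟩ := hodd
  have hk0 : 1 ≤ k0 := by omega
  have hk0R : (1:ℝ) ≤ (k0:ℝ) := by exact_mod_cast hk0
  set Mc : Matrix (Fin N) (Fin N) ℂ := (matC N e).map Complex.ofReal with hMc
  have hconv : Convex ℝ (mNumRange Mc) := NRAux.convex_mNumRange Mc
  have hclosedW : IsClosed (mNumRange Mc) := isClosed_mNumRange Mc
  have hNm1 : Real.sqrt (((N:ℝ) - 1)/2) = Real.sqrt (k0:ℝ) := by
    rw [show ((N:ℝ) - 1)/2 = (k0:ℝ) from by rw [hNk]; push_cast; ring]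
  have hNp1 : Real.sqrt (((N:ℝ) + 1)/2) = Real.sqrt ((k0:ℝ)+1) := by
    rw [show ((N:ℝ) + 1)/2 = (k0:ℝ)+1 from by rw [hNk]; push_cast; ring]
  set Pr : ℝ := ((k0:ℝ)*((k0:ℝ)+1)*((k0:ℝ)+2))/3 with hPr
  constructor
  · -- the disc
    intro z hz
    simp only [Set.mem_setOf_eq] at hz
    rw [hNm1] at hz
    by_contra hzW
    obtain ⟨f, u, hfW, hfz⟩ := geometric_hahn_banach_closed_point hconv hclosedW hzW
    set c1 : ℝ := f 1 with hc1
    set cI : ℝ := f Complex.I with hcI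
    have hflin : ∀ v : ℂ, f v = v.re * c1 + v.im * cI := by
      intro v
      conv_lhs => rw [← Complex.re_add_im v]
      rw [map_add]
      have h1 : (v.re : ℂ) = v.re • (1:ℂ) := by simp [Complex.real_smul]
      have h2 : (v.im : ℂ) * Complex.I = v.im • Complex.I := by simp [Complex.real_smul]
      rw [h1, h2, _root_.map_smul, _root_.map_smul]
      simp [smul_eq_mul, hc1, hcI]
    set L : ℝ := Real.sqrt (c1^2 + cI^2) with hL
    have hLsq : L^2 = c1^2 + cI^2 := Real.sq_sqrt (by positivity)
    have hL0 : 0 ≤ L := Real.sqrt_nonneg _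
    -- a point of the numerical range (for nonemptiness)
    obtain ⟨w0, hw0W, _, _⟩ := support_point N k0 hNk hk0 e ε hε hclose 1 0 (by norm_num)
    have hLpos : 0 < L := by
      rcases lt_or_eq_of_le hL0 with h | h
      · exact h
      · exfalso
        have hcc : c1^2 + cI^2 = 0 := by rw [← hLsq, ← h]; ring
        have hc10 : c1 = 0 := by nlinarith [sq_nonneg c1, sq_nonneg cI]
        have hcI0 : cI = 0 := by nlinarith [sq_nonneg c1, sq_nonneg cI]
        have h1 := hfW w0 hw0W
        rw [hflin w0, hc10, hcI0] at h1
        rw [hflin z, hc10, hcI0] at hfz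
        linarith
    have hdir : (c1/L)^2 + (cI/L)^2 = 1 := by
      field_simp
      try rw [← hLsq]
      try ring
      try rw [hLsq]
    obtain ⟨w, hwW, _, hwval⟩ :=
      support_point N k0 hNk hk0 e ε hε hclose (c1/L) (cI/L) hdir
    set Dd : ℝ := (k0:ℝ)*(c1/L)^2 + ((k0:ℝ)+1)*(cI/L)^2 with hDd
    have hDdpos : 0 < Dd := by
      rw [hDd]; nlinarith [sq_nonneg (c1/L), sq_nonneg (cI/L)]
    have hDdle : Dd ≤ (k0:ℝ)+1 := by
      rw [hDd]; nlinarith [sq_nonneg (c1/L), sq_nonneg (cI/L)]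
    have hk00 : (0:ℝ) < (k0:ℝ) := by linarith
    have hτd : Real.sqrt (k0:ℝ) ≤ Real.sqrt (Pr/Dd) := by
      apply Real.sqrt_le_sqrt
      rw [le_div_iff₀ hDdpos]
      have e1 : (k0:ℝ)*Dd ≤ (k0:ℝ)*((k0:ℝ)+1) := mul_le_mul_of_nonneg_left hDdle hk00.le
      have e2 : (k0:ℝ)*((k0:ℝ)+1) ≤ Pr := by
        rw [hPr]
        nlinarith [mul_nonneg (mul_nonneg hk00.le
          (show (0:ℝ) ≤ (k0:ℝ)+1 by linarith)) (show (0:ℝ) ≤ (k0:ℝ)-1 by linarith)]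
      linarith
    have h5 : L*(Real.sqrt (k0:ℝ) - ε) ≤ f w := by
      rw [hflin w]
      have h5a : Real.sqrt (k0:ℝ) - ε ≤ (c1/L)*w.re + (cI/L)*w.im := by
        have := hwval
        rw [← hPr] at this
        linarith [hτd]
      have h5b : L*((c1/L)*w.re + (cI/L)*w.im) = w.re*c1 + w.im*cI := by
        field_simp
      calc L*(Real.sqrt (k0:ℝ) - ε) ≤ L*((c1/L)*w.re + (cI/L)*w.im) :=
            mul_le_mul_of_nonneg_left h5a hL0
        _ = w.re*c1 + w.im*cI := h5b
    have h6 : f z ≤ L * (Real.sqrt (k0:ℝ) - ε) := by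
      rw [hflin z]
      have habsz : ‖z‖^2 = z.re^2 + z.im^2 := by
        rw [Complex.sq_norm, Complex.normSq_apply]; ring
      have h7 : z.re*c1 + z.im*cI ≤ L * ‖z‖ := by
        have habs2 : (z.re*c1 + z.im*cI)^2 ≤ (L * ‖z‖)^2 := by
          have hexp : (L * ‖z‖)^2 = (c1^2 + cI^2)*(z.re^2 + z.im^2) := by
            rw [mul_pow, hLsq, habsz]
          rw [hexp]
          nlinarith [sq_nonneg (z.re*cI - z.im*c1)]
        nlinarith [habs2, mul_nonneg hL0 (norm_nonneg z)]
      have h8 : L * ‖z‖ ≤ L * (Real.sqrt (k0:ℝ) - ε) :=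
        mul_le_mul_of_nonneg_left hz hL0
      linarith
    have h9 := hfW w hwW
    linarith
  · -- the real segment
    rintro zc ⟨r, hr, rfl⟩
    rw [hNp1] at hr
    obtain ⟨hr1, hr2⟩ := hr
    obtain ⟨wp, hwpW, hwpim, hwpval⟩ :=
      support_point N k0 hNk hk0 e ε hε hclose 1 0 (by norm_num)
    obtain ⟨wm, hwmW, hwmim, hwmval⟩ :=
      support_point N k0 hNk hk0 e ε hε hclose (-1) 0 (by norm_num)
    have hwpim0 : wp.im = 0 := hwpim rfl
    have hwmim0 : wm.im = 0 := hwmim rfl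
    have hk00 : (0:ℝ) < (k0:ℝ) := by linarith
    have hDd0 : (k0:ℝ)*(1:ℝ)^2 + ((k0:ℝ)+1)*(0:ℝ)^2 = (k0:ℝ) := by ring
    have hDd1 : (k0:ℝ)*(-1:ℝ)^2 + ((k0:ℝ)+1)*(0:ℝ)^2 = (k0:ℝ) := by ring
    have hτ0 : Real.sqrt ((k0:ℝ)+1) ≤ Real.sqrt (Pr/(k0:ℝ)) := by
      apply Real.sqrt_le_sqrt
      rw [le_div_iff₀ hk00]
      have e2 : ((k0:ℝ)+1)*(k0:ℝ) ≤ Pr := by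
        rw [hPr]
        nlinarith [mul_nonneg (mul_nonneg hk00.le
          (show (0:ℝ) ≤ (k0:ℝ)+1 by linarith)) (show (0:ℝ) ≤ (k0:ℝ)-1 by linarith)]
      linarith
    have hwp : Real.sqrt ((k0:ℝ)+1) - ε ≤ wp.re := by
      have := hwpval
      rw [hDd0, ← hPr] at this
      have h1 : 1*wp.re + 0*wp.im = wp.re := by ring
      rw [h1] at this
      linarith [hτ0]
    have hwm : wm.re ≤ -(Real.sqrt ((k0:ℝ)+1) - ε) := by
      have := hwmval
      rw [hDd1, ← hPr] at this
      have h1 : (-1)*wm.re + 0*wm.im = -wm.re := by ring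
      rw [h1] at this
      linarith [hτ0]
    -- the real slice of the numerical range is convex
    set sR : Set ℝ := {t : ℝ | ((t:ℝ):ℂ) ∈ mNumRange Mc} with hsR
    have hsRconv : Convex ℝ sR := by
      intro a haS b hbS p q hp hq hpq
      show (((p • a + q • b : ℝ)):ℂ) ∈ mNumRange Mc
      have hcast : (((p • a + q • b : ℝ)):ℂ) = p • ((a:ℝ):ℂ) + q • ((b:ℝ):ℂ) := by
        simp only [smul_eq_mul, Complex.real_smul]
        push_cast
        ring
      rw [hcast]
      exact hconv haS hbS hp hq hpq
    have hOC : sR.OrdConnected := hsRconv.ordConnected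
    have hwpmem : wp.re ∈ sR := by
      have : ((wp.re:ℝ):ℂ) = wp := by
        apply Complex.ext
        · simp
        · simp [hwpim0]
      show ((wp.re:ℝ):ℂ) ∈ mNumRange Mc
      rw [this]
      exact hwpW
    have hwmmem : wm.re ∈ sR := by
      have : ((wm.re:ℝ):ℂ) = wm := by
        apply Complex.ext
        · simp
        · simp [hwmim0]
      show ((wm.re:ℝ):ℂ) ∈ mNumRange Mc
      rw [this]
      exact hwmW
    have hrmem : r ∈ Set.Icc wm.re wp.re := by
      constructor
      · linarith
      · linarith
    exact hOC.out hwmmem hwpmem hrmem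
end

section
/- Let Γ be a compact metric space equipped with a finite Borel measure μ. Let z ∈ L^∞(Γ, μ), let S be a nonempty index set, and let {f_φ : φ ∈ S} be a subset of C(Γ) that is bounded in the supremum norm. Then sup_{φ ∈ S} esssup_{x ∈ Γ} |z(x) f_φ(x)| = esssup_{x ∈ Γ} (|z(x)| · sup_{φ ∈ S} |f_φ(x)|), where esssup denotes essential supremum with respect to μ. -/
open MeasureTheory Filter Set

/-- On a compact metric space `Γ` with a finite Borel measure `μ`: for `z ∈ L^∞(Γ, μ)` and
a bounded family `(f φ)_{φ ∈ S}` of continuous functions on `Γ`,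
`sup_φ esssup_x |z(x) f_φ(x)| = esssup_x (|z(x)| · sup_φ |f_φ(x)|)`. -/
theorem iSup_essSup_eq_essSup_iSup
    {Γ : Type*} [MetricSpace Γ] [CompactSpace Γ] [MeasurableSpace Γ] [BorelSpace Γ]
    (μ : Measure Γ) [IsFiniteMeasure μ]
    {S : Type*} [Nonempty S]
    (z : Γ → ℂ) (hz : MemLp z ⊤ μ)
    (f : S → C(Γ, ℂ)) (C : ℝ) (hf : ∀ φ : S, ‖f φ‖ ≤ C) :
    (⨆ φ : S, essSup (fun x => ‖z x * f φ x‖) μ) =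
      essSup (fun x => ‖z x‖ * ⨆ φ : S, ‖f φ x‖) μ := by
  classical
  obtain ⟨φ₀⟩ := ‹Nonempty S›
  have hC0 : (0 : ℝ) ≤ C := (norm_nonneg _).trans (hf φ₀)
  have hbdd : ∀ (x : Γ) (φ : S), ‖f φ x‖ ≤ C := fun x φ =>
    ((f φ).norm_coe_le_norm x).trans (hf φ)
  have hbddA : ∀ x : Γ, BddAbove (Set.range fun φ : S => ‖f φ x‖) := fun x =>
    ⟨C, by rintro r ⟨φ, rfl⟩; exact hbdd x φ⟩
  have hgC : ∀ x : Γ, (⨆ φ : S, ‖f φ x‖) ≤ C := fun x => ciSup_le (hbdd x)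
  have hg0 : ∀ x : Γ, 0 ≤ ⨆ φ : S, ‖f φ x‖ := fun x =>
    (norm_nonneg (f φ₀ x)).trans (le_ciSup (hbddA x) φ₀)
  rcases eq_or_ne μ 0 with rfl | hμ
  · have h0 : ∀ w : Γ → ℝ, essSup w (0 : Measure Γ) = 0 := by
      intro w
      show Filter.limsup w (ae (0 : Measure Γ)) = 0
      rw [ae_zero, Filter.limsup_eq]
      simp only [eventually_bot, Set.setOf_true]
      exact Real.sInf_of_not_bddBelow (by simpa using not_bddBelow_univ (α := ℝ))
    simp only [h0, ciSup_const]
  · haveI : NeZero μ := ⟨hμ⟩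
    set K : ℝ := (eLpNormEssSup z μ).toReal with hK_def
    have hK0 : 0 ≤ K := ENNReal.toReal_nonneg
    have hzK : ∀ᵐ x ∂μ, ‖z x‖ ≤ K := by
      have hne : eLpNormEssSup z μ ≠ ⊤ := by
        simpa [eLpNorm_exponent_top] using hz.eLpNorm_ne_top
      filter_upwards [ae_le_eLpNormEssSup (f := z) (μ := μ)] with x hx
      have := ENNReal.toReal_mono hne hx
      simpa using this
    -- notation
    have hu_le : ∀ φ : S, ∀ᵐ x ∂μ, ‖z x * f φ x‖ ≤ K * C := by
      intro φ
      filter_upwards [hzK] with x hx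
      rw [norm_mul]
      exact mul_le_mul hx (hbdd x φ) (norm_nonneg _) hK0
    have huB : ∀ φ : S, IsBoundedUnder (· ≤ ·) (ae μ) (fun x => ‖z x * f φ x‖) :=
      fun φ => ⟨K * C, eventually_map.2 (hu_le φ)⟩
    have hu_cb : ∀ φ : S, IsCoboundedUnder (· ≤ ·) (ae μ) (fun x => ‖z x * f φ x‖) :=
      fun φ => IsBoundedUnder.isCoboundedUnder_le
        ⟨0, eventually_map.2 (Eventually.of_forall fun x => norm_nonneg _)⟩
    have hessB : ∀ φ : S, essSup (fun x => ‖z x * f φ x‖) μ ≤ K * C :=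
      fun φ => limsup_le_of_le (hu_cb φ) (hu_le φ)
    have hMbdd : BddAbove (Set.range fun φ : S => essSup (fun x => ‖z x * f φ x‖) μ) :=
      ⟨K * C, by rintro r ⟨φ, rfl⟩; exact hessB φ⟩
    have hvB : IsBoundedUnder (· ≤ ·) (ae μ) (fun x => ‖z x‖ * ⨆ φ : S, ‖f φ x‖) := by
      refine ⟨K * C, eventually_map.2 ?_⟩
      filter_upwards [hzK] with x hx
      exact mul_le_mul hx (hgC x) (hg0 x) hK0
    apply le_antisymm
    · refine ciSup_le fun φ => ?_
      refine limsup_le_limsup (Eventually.of_forall fun x => ?_) (hu_cb φ) hvB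
      show ‖z x * f φ x‖ ≤ ‖z x‖ * ⨆ φ : S, ‖f φ x‖
      rw [norm_mul]
      exact mul_le_mul_of_nonneg_left (le_ciSup (hbddA x) φ) (norm_nonneg _)
    · -- countable reduction using separability of C(Γ, ℂ)
      obtain ⟨c, hc_sub, hc_count, hc_dense⟩ :=
        (TopologicalSpace.IsSeparable.of_separableSpace (Set.range f)).exists_countable_dense_subset
      have hsec : ∀ y : c, ∃ φ : S, f φ = (y : C(Γ, ℂ)) := fun y => hc_sub y.2
      choose sec hsec' using hsec
      haveI : Countable c := hc_count.to_subtype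
      haveI : Nonempty c := by
        rcases Set.eq_empty_or_nonempty c with rfl | h
        · exfalso
          have : (f φ₀ : C(Γ, ℂ)) ∈ closure (∅ : Set C(Γ, ℂ)) := hc_dense ⟨φ₀, rfl⟩
          simpa using this
        · exact h.to_subtype
      have hbddc : ∀ x : Γ, BddAbove (Set.range fun y : c => ‖f (sec y) x‖) := fun x =>
        ⟨C, by rintro r ⟨y, rfl⟩; exact hbdd x (sec y)⟩
      -- the pointwise sup over S equals the sup over the countable family
      have hg_eq : ∀ x : Γ, (⨆ φ : S, ‖f φ x‖) = ⨆ y : c, ‖f (sec y) x‖ := by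
        intro x
        refine le_antisymm (ciSup_le fun φ => ?_) (ciSup_le fun y => le_ciSup (hbddA x) (sec y))
        refine le_of_forall_pos_le_add fun ε hε => ?_
        have hmem : (f φ : C(Γ, ℂ)) ∈ closure c := hc_dense ⟨φ, rfl⟩
        obtain ⟨d, hdc, hd⟩ := Metric.mem_closure_iff.1 hmem ε hε
        have h1 : dist (f φ x) (f (sec ⟨d, hdc⟩) x) < ε := by
          rw [hsec']
          exact lt_of_le_of_lt (ContinuousMap.dist_apply_le_dist x) hd
        have h2 : ‖f φ x‖ ≤ ‖f (sec ⟨d, hdc⟩) x‖ + ε := by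
          calc ‖f φ x‖ ≤ ‖f (sec ⟨d, hdc⟩) x‖ + ‖f φ x - f (sec ⟨d, hdc⟩) x‖ :=
                norm_le_norm_add_norm_sub' _ _
            _ ≤ ‖f (sec ⟨d, hdc⟩) x‖ + ε := by
                rw [← dist_eq_norm]
                exact add_le_add_right h1.le _
        exact h2.trans (add_le_add_left (le_ciSup (hbddc x) ⟨d, hdc⟩) ε)
      -- a.e. bound for each member of the countable family
      have hae : ∀ᵐ x ∂μ, ∀ y : c,
          ‖z x * f (sec y) x‖ ≤ ⨆ φ : S, essSup (fun x => ‖z x * f φ x‖) μ := by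
        rw [ae_all_iff]
        intro y
        filter_upwards [ae_le_essSup (huB (sec y))] with x hx
        exact hx.trans (le_ciSup hMbdd (sec y))
      show Filter.limsup (fun x => ‖z x‖ * ⨆ φ : S, ‖f φ x‖) (ae μ) ≤ _
      refine limsup_le_of_le (IsBoundedUnder.isCoboundedUnder_le
        ⟨0, eventually_map.2 (Eventually.of_forall fun x =>
          mul_nonneg (norm_nonneg _) (hg0 x))⟩) ?_
      filter_upwards [hae] with x hx
      have hxeq : ‖z x‖ * (⨆ φ : S, ‖f φ x‖) = ⨆ y : c, ‖z x * f (sec y) x‖ := by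
        rw [hg_eq x, Real.mul_iSup_of_nonneg (norm_nonneg _)]
        simp_rw [norm_mul]
      rw [hxeq]
      exact ciSup_le hx
end
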